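/- Let x be a Nash equilibrium of the stable matching game. For a woman w, let N_w(x) = {k ∈ M : x_{kw} > 0} be the set of men who fractionally propose to her. Then no man m can simultaneously be the most preferred man (with respect to >_{w_1}) in N_{w_1}(x) and the most preferred man (with respect to >_{w_2}) in N_{w_2}(x) for two distinct women w_1 ≠ w_2 with m ∈ N_{w_1}(x) ∩ N_{w_2}(x). -/
import Mathlib


open Finset Real MeasureTheory

namespace SM

variable {n : ℕ}

/-- The set of men that woman `w` strictly prefers to man `m`
(`rankW w k` is woman `w`'s cardinal ranking score of man `k`;
`k >_w m` iff `rankW w m < rankW w k`). -/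
noncomputable def better (rankW : Fin n → Fin n → ℝ) (w m : Fin n) : Finset (Fin n) :=
  Finset.univ.filter fun k => rankW w m < rankW w k

/-- Market assumptions: men's cardinal preferences lie in `(0,1]` with no ties, and each
woman's ranking of the men is strict (injective scores). -/
def MarketHyp (μp rankW : Fin n → Fin n → ℝ) : Prop :=
  (∀ m w, μp m w ∈ Set.Ioc (0:ℝ) 1) ∧
  (∀ m w w', w ≠ w' → μp m w ≠ μp m w') ∧
  (∀ w, Function.Injective (rankW w))

/-- `v_{mw}(x) = μ_{mw} ∏_{k >_w m} (1 - x_{kw})`. -/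
noncomputable def vv (μp rankW : Fin n → Fin n → ℝ) (x : Fin n → Fin n → ℝ) (m w : Fin n) : ℝ :=
  μp m w * ∏ k ∈ better rankW w m, (1 - x k w)

/-- Payoff `u_m(x) = ∑_w v_{mw}(x) x_{mw}` of man `m` in the stable matching game. -/
noncomputable def uu (μp rankW : Fin n → Fin n → ℝ) (x : Fin n → Fin n → ℝ) (m : Fin n) : ℝ :=
  ∑ w, vv μp rankW x m w * x m w

/-- Mixed strategy: a probability vector over the women. -/
def IsStrategy (y : Fin n → ℝ) : Prop := (∀ w, 0 ≤ y w) ∧ ∑ w, y w = 1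

/-- Pure strategy: the indicator vector of a single woman. -/
def IsPure (y : Fin n → ℝ) : Prop := ∃ w₀, y = fun w => if w = w₀ then (1:ℝ) else 0

/-- (Mixed) Nash equilibrium of the stable matching game. -/
def IsNE (μp rankW : Fin n → Fin n → ℝ) (x : Fin n → Fin n → ℝ) : Prop :=
  (∀ m, IsStrategy (x m)) ∧
  ∀ m y, IsStrategy y → uu μp rankW (Function.update x m y) m ≤ uu μp rankW x m

/-- Pure Nash equilibrium of the stable matching game. -/
def IsPureNE (μp rankW : Fin n → Fin n → ℝ) (x : Fin n → Fin n → ℝ) : Prop :=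
  (∀ m, IsPure (x m)) ∧
  ∀ m y, IsPure y → uu μp rankW (Function.update x m y) m ≤ uu μp rankW x m

/-- Characteristic vector of the perfect matching `σ`. -/
def charVec (σ : Equiv.Perm (Fin n)) : Fin n → Fin n → ℝ :=
  fun m w => if w = σ m then 1 else 0

/-- A perfect matching `σ` is stable iff it admits no blocking pair `(m, σ m')`. -/
def IsStableMatching (μp rankW : Fin n → Fin n → ℝ) (σ : Equiv.Perm (Fin n)) : Prop :=
  ¬ ∃ m m' : Fin n, m ≠ m' ∧ μp m (σ m) < μp m (σ m') ∧ rankW (σ m') m' < rankW (σ m') m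

/-- `Δ = min_{m, w ≠ w'} |μ_{mw} - μ_{mw'}|`. -/
noncomputable def gapDelta (μp : Fin n → Fin n → ℝ) : ℝ :=
  sInf {d : ℝ | ∃ m w w' : Fin n, w ≠ w' ∧ d = |μp m w - μp m w'|}

/-- `μ_min = min_{m,w} μ_{mw}`. -/
noncomputable def muMin (μp : Fin n → Fin n → ℝ) : ℝ :=
  sInf {a : ℝ | ∃ m w : Fin n, a = μp m w}

/-- `μ_max = max_{m,w} μ_{mw}`. -/
noncomputable def muMax (μp : Fin n → Fin n → ℝ) : ℝ :=
  sSup {a : ℝ | ∃ m w : Fin n, a = μp m w}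

/-- Entrywise ℓ¹ distance on strategy profiles. -/
noncomputable def l1dist (x y : Fin n → Fin n → ℝ) : ℝ :=
  ∑ m, ∑ w, |x m w - y m w|

/-- The logit (exponential-weights) map. -/
noncomputable def logit (η : ℝ) (L : Fin n → ℝ) (w : Fin n) : ℝ :=
  Real.exp (η * L w) / ∑ w', Real.exp (η * L w')

lemma vv_update_self {n : ℕ} (μp rankW : Fin n → Fin n → ℝ)
    (x : Fin n → Fin n → ℝ) (m : Fin n) (y : Fin n → ℝ) (w : Fin n) :
    vv μp rankW (Function.update x m y) m w = vv μp rankW x m w := by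
  unfold vv
  congr 1
  apply Finset.prod_congr rfl
  intro k hk
  simp only [better, Finset.mem_filter] at hk
  have hkm : k ≠ m := by
    rintro rfl; exact lt_irrefl _ hk.2
  rw [Function.update_of_ne hkm]

lemma improve {n : ℕ} (μp rankW : Fin n → Fin n → ℝ)
    (x : Fin n → Fin n → ℝ) (hNE : IsNE μp rankW x)
    (m w₁ w₂ : Fin n) (hne : w₁ ≠ w₂) (h1 : 0 < x m w₁)
    (hlt : vv μp rankW x m w₁ < vv μp rankW x m w₂) : False := by
  set y : Fin n → ℝ := fun w =>
    if w = w₁ then 0 else if w = w₂ then x m w₁ + x m w₂ else x m w with hy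
  have hdiff : ∀ w, y w = x m w + ((if w = w₂ then x m w₁ else 0)
      - (if w = w₁ then x m w₁ else 0)) := by
    intro w
    by_cases hw1 : w = w₁
    · subst hw1; simp [hy, hne]
    · by_cases hw2 : w = w₂
      · subst hw2; simp [hy, hw1]; ring
      · simp [hy, hw1, hw2]
  have hxs := hNE.1 m
  have hys : IsStrategy y := by
    constructor
    · intro w
      by_cases hw1 : w = w₁
      · subst hw1; simp [hy, hne]
      · by_cases hw2 : w = w₂
        · have := hxs.1 w₂; have := hxs.1 w₁
          simp [hy, hw1, hw2, hne.symm]; linarith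
        · simp [hy, hw1, hw2]; exact hxs.1 w
    · rw [Finset.sum_congr rfl (fun w _ => hdiff w)]
      rw [Finset.sum_add_distrib, hxs.2, Finset.sum_sub_distrib]
      simp
  have hle := hNE.2 m y hys
  have hnew : uu μp rankW (Function.update x m y) m = ∑ w, vv μp rankW x m w * y w := by
    unfold uu
    apply Finset.sum_congr rfl
    intro w _
    rw [vv_update_self, Function.update_self]
  have hgain : uu μp rankW (Function.update x m y) m - uu μp rankW x m
      = (vv μp rankW x m w₂ - vv μp rankW x m w₁) * x m w₁ := by
    rw [hnew]
    unfold uu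
    rw [← Finset.sum_sub_distrib]
    have : ∀ w ∈ Finset.univ, vv μp rankW x m w * y w - vv μp rankW x m w * x m w
        = (if w = w₂ then vv μp rankW x m w * x m w₁ else 0)
          - (if w = w₁ then vv μp rankW x m w * x m w₁ else 0) := by
      intro w _
      rw [hdiff w]
      by_cases hw1 : w = w₁ <;> by_cases hw2 : w = w₂ <;> simp [hw1, hw2, hne, hne.symm] <;> ring
    rw [Finset.sum_congr rfl this, Finset.sum_sub_distrib,
      Finset.sum_ite_eq' Finset.univ w₂, Finset.sum_ite_eq' Finset.univ w₁]
    simp; ring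
  nlinarith

/-- at a Nash equilibrium, no man can be the most preferred man of two distinct
women among the men fractionally proposing to them. -/
theorem NE_no_double_top {n : ℕ} (μp rankW : Fin n → Fin n → ℝ)
    (hM : MarketHyp μp rankW)
    (x : Fin n → Fin n → ℝ) (hNE : IsNE μp rankW x)
    (m : Fin n) (w₁ w₂ : Fin n) (hne : w₁ ≠ w₂)
    (h1 : 0 < x m w₁) (h2 : 0 < x m w₂)
    (htop1 : ∀ k, 0 < x k w₁ → rankW w₁ k ≤ rankW w₁ m)
    (htop2 : ∀ k, 0 < x k w₂ → rankW w₂ k ≤ rankW w₂ m) :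
    False := by
  have hval : ∀ w : Fin n, (∀ k, 0 < x k w → rankW w k ≤ rankW w m) →
      vv μp rankW x m w = μp m w := by
    intro w htop
    unfold vv
    rw [Finset.prod_eq_one, mul_one]
    intro k hk
    simp only [better, Finset.mem_filter] at hk
    have hx0 : x k w = 0 := by
      rcases lt_or_eq_of_le ((hNE.1 k).1 w) with h | h
      · exact absurd (htop k h) (not_le.mpr hk.2)
      · exact h.symm
    rw [hx0]; ring
  have hv1 := hval w₁ htop1
  have hv2 := hval w₂ htop2
  have hμne : μp m w₁ ≠ μp m w₂ := hM.2.1 m w₁ w₂ hne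
  rcases hμne.lt_or_gt with h | h
  · exact improve μp rankW x hNE m w₁ w₂ hne h1 (by rw [hv1, hv2]; exact h)
  · exact improve μp rankW x hNE m w₂ w₁ hne.symm h2 (by rw [hv1, hv2]; exact h)

end SM
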